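/- Consider the single-state, single-step multi-objective decision problem with three actions a_1, a_2, a_3 and reward vectors r(a_1) = (3,3), r(a_2) = (1,10), r(a_3) = (10,1) in ℝ², and the concave utility u(x,y) = min(x,y). Then: (i) for every probability distribution π over {a_1,a_2,a_3}, the expected scalarized return ∑_a π(a)·u(r(a)) is at most u(r(a_1)) = 3, so the deterministic policy choosing a_1 is ESR-optimal; and (ii) the expected reward vector of the mixed policy π = (0, 1/2, 1/2), namely (5.5, 5.5), strictly Pareto dominates (3,3) componentwise. Hence the ESR-optimal policy is not weakly Pareto optimal. -/

import Mathlib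

open Finset

/-- The reward vectors `r(a_1) = (3,3)`, `r(a_2) = (1,10)`, `r(a_3) = (10,1)`. -/
noncomputable def exReward : Fin 3 → Fin 2 → ℝ :=
  ![![3, 3], ![1, 10], ![10, 1]]

/-- The concave utility `u(x, y) = min(x, y)`. -/
noncomputable def exUtility (v : Fin 2 → ℝ) : ℝ := min (v 0) (v 1)

theorem esr_optimal_not_weakly_pareto_optimal :
    (exUtility (exReward 0) = 3) ∧
    (∀ π : Fin 3 → ℝ, (∀ a, 0 ≤ π a) → ∑ a, π a = 1 →
      ∑ a, π a * exUtility (exReward a) ≤ exUtility (exReward 0)) ∧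
    (∀ i, exReward 0 i < ∑ a, (![0, 1/2, 1/2] : Fin 3 → ℝ) a * exReward a i) ∧
    (∃ π : Fin 3 → ℝ, (∀ a, 0 ≤ π a) ∧ ∑ a, π a = 1 ∧
      ∀ i, exReward 0 i < ∑ a, π a * exReward a i) := by
  refine ⟨by norm_num [exUtility, exReward], ?_, ?_, ?_⟩
  · intro π hpos hsum
    have h1 := hpos 1
    have h2 := hpos 2
    have hs : π 0 + π 1 + π 2 = 1 := by
      simpa [Fin.sum_univ_three] using hsum
    simp only [Fin.sum_univ_three, exUtility, exReward, Matrix.cons_val]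
    norm_num
    nlinarith
  · intro i
    fin_cases i <;> norm_num [Fin.sum_univ_three, exReward, Matrix.cons_val_two, Matrix.tail_cons, Matrix.head_cons]
  · refine ⟨![0, 1/2, 1/2], ?_, ?_, ?_⟩
    · intro a; fin_cases a <;> norm_num
    · norm_num [Fin.sum_univ_three, Matrix.cons_val_two, Matrix.tail_cons, Matrix.head_cons]
    · intro i; fin_cases i <;> norm_num [Fin.sum_univ_three, exReward, Matrix.cons_val_two, Matrix.tail_cons, Matrix.head_cons]
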